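/- (Lemma 1, equation (4).) Let m be a family of coefficients indexed by pairs λ1 ≥ λ2 ≥ 0, let f = Σ m(λ1,λ2)·S_{(λ1,λ2)}(x,y) ∈ ℚ[[x,y]], and let h(t,v) = M'(f)(t,v) be its multiplicity series. Let g(t,v) = M'( f·((1−x)(1−y))^{-1} )(t,v) be the multiplicity series of f·((1−x)(1−y))^{-1} (the inverse exists since (1−x)(1−y) has constant term 1). Then in ℚ[[t,v]]: (1−t)(t−v)·g(t,v) = t·h(t,v) − v·h(v,v), where h(v,v) denotes the substitution t := v in h. -/

import Mathlib

open Finset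

abbrev Q2 : Type := MvPowerSeries (Fin 2) ℚ

noncomputable def Xv (i : Fin 2) : Q2 := MvPowerSeries.X i

noncomputable def mon (i j : ℕ) : Fin 2 →₀ ℕ := Finsupp.single 0 i + Finsupp.single 1 j

noncomputable def c (i j : ℕ) (f : Q2) : ℚ := MvPowerSeries.coeff (mon i j) f

/-- Schur function S_{(l1,l2)}(x,y) for l1 ≥ l2. -/
noncomputable def schur (l1 l2 : ℕ) : Q2 :=
  (Xv 0 * Xv 1) ^ l2 * ∑ i ∈ range (l1 - l2 + 1), Xv 0 ^ i * Xv 1 ^ (l1 - l2 - i)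

/-- f = Σ_{l1 ≥ l2 ≥ 0} m(l1,l2) · S_{(l1,l2)}, expressed coefficientwise
(each coefficient receives only finitely many contributions, since `schur l1 l2`
is homogeneous of degree `l1 + l2`). -/
def IsSchurExpansion (m : ℕ → ℕ → ℚ) (f : Q2) : Prop :=
  ∀ i j : ℕ, c i j f =
    ∑ l1 ∈ range (i + j + 1), ∑ l2 ∈ range (l1 + 1), m l1 l2 * c i j (schur l1 l2)

/-- h(t,v) = Σ_{l1 ≥ l2 ≥ 0} m(l1,l2) t^{l1-l2} v^{l2}, the multiplicity series. -/
def IsMultSeries (m : ℕ → ℕ → ℚ) (h : Q2) : Prop :=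
  ∀ p q : ℕ, c p q h = m (p + q) q

/-- Substitution of φ0, φ1 (series with zero constant term) for the two variables of h:
the coefficient of a monomial e in h(φ0,φ1) only receives contributions from monomials
t^p v^q of h with p + q ≤ |e|. -/
noncomputable def subst2 (φ0 φ1 h : Q2) : Q2 :=
  fun e => ∑ p ∈ range (e 0 + e 1 + 1), ∑ q ∈ range (e 0 + e 1 + 1),
    MvPowerSeries.coeff (mon p q) h * MvPowerSeries.coeff e (φ0 ^ p * φ1 ^ q)

/-- Substitution of a series φ with zero constant term into a one-variable series a. -/
noncomputable def substP (φ : Q2) (a : PowerSeries ℚ) : Q2 :=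
  fun e => ∑ k ∈ range (e 0 + e 1 + 1),
    PowerSeries.coeff k a * MvPowerSeries.coeff e (φ ^ k)

/-! ### Auxiliary lemmas -/

@[simp] lemma mon_apply0 (i j : ℕ) : mon i j 0 = i := by
  simp [mon, Finsupp.single_apply]

@[simp] lemma mon_apply1 (i j : ℕ) : mon i j 1 = j := by
  simp [mon, Finsupp.single_apply]

@[simp] lemma mon_inj {i j a b : ℕ} : mon i j = mon a b ↔ i = a ∧ j = b := by
  constructor
  · intro H
    exact ⟨by rw [← mon_apply0 i j, H, mon_apply0], by rw [← mon_apply1 i j, H, mon_apply1]⟩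
  · rintro ⟨rfl, rfl⟩; rfl

lemma eq_mon (e : Fin 2 →₀ ℕ) : e = mon (e 0) (e 1) := by
  ext x
  fin_cases x
  · simp
  · simp

lemma Xv_eq_monomial (i : Fin 2) : Xv i = MvPowerSeries.monomial (Finsupp.single i 1) 1 := by
  rw [Xv, ← pow_one (MvPowerSeries.X i), MvPowerSeries.X_pow_eq]

lemma X0X1_eq (a b : ℕ) : Xv 0 ^ a * Xv 1 ^ b = MvPowerSeries.monomial (mon a b) 1 := by
  rw [Xv, Xv, MvPowerSeries.X_pow_eq, MvPowerSeries.X_pow_eq,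
    MvPowerSeries.monomial_mul_monomial, one_mul, mon]

lemma c_XX (i j a b : ℕ) : c i j (Xv 0 ^ a * Xv 1 ^ b) = if i = a ∧ j = b then 1 else 0 := by
  rw [c, X0X1_eq, MvPowerSeries.coeff_monomial]
  simp [mon_inj]

lemma c_sub (i j : ℕ) (A B : Q2) : c i j (A - B) = c i j A - c i j B := by simp [c]

lemma c_add (i j : ℕ) (A B : Q2) : c i j (A + B) = c i j A + c i j B := by simp [c]

lemma c_X0_mul (i j : ℕ) (φ : Q2) :
    c i j (Xv 0 * φ) = if i = 0 then 0 else c (i - 1) j φ := by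
  rw [c, Xv_eq_monomial, MvPowerSeries.coeff_monomial_mul]
  by_cases hi : i = 0
  · rw [if_pos hi, if_neg]
    intro hle
    have := Finsupp.le_def.mp hle 0
    simp [hi] at this
  · rw [if_neg hi, if_pos, one_mul, c]
    · have : mon i j - Finsupp.single 0 1 = mon (i - 1) j := by
        ext x
        fin_cases x
        · simp [Finsupp.single_apply]
        · simp [Finsupp.single_apply]
      rw [this]
    · refine Finsupp.le_def.mpr fun x => ?_
      fin_cases x
      · simp [Finsupp.single_apply]; omega
      · simp [Finsupp.single_apply]

lemma c_X1_mul (i j : ℕ) (φ : Q2) :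
    c i j (Xv 1 * φ) = if j = 0 then 0 else c i (j - 1) φ := by
  rw [c, Xv_eq_monomial, MvPowerSeries.coeff_monomial_mul]
  by_cases hj : j = 0
  · rw [if_pos hj, if_neg]
    intro hle
    have := Finsupp.le_def.mp hle 1
    simp [hj] at this
  · rw [if_neg hj, if_pos, one_mul, c]
    · have : mon i j - Finsupp.single 1 1 = mon i (j - 1) := by
        ext x
        fin_cases x
        · simp [Finsupp.single_apply]
        · simp [Finsupp.single_apply]
      rw [this]
    · refine Finsupp.le_def.mpr fun x => ?_
      fin_cases x
      · simp [Finsupp.single_apply]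
      · simp [Finsupp.single_apply]; omega

lemma c_schur (l1 l2 i j : ℕ) (h : l2 ≤ l1) :
    c i j (schur l1 l2) = if i + j = l1 + l2 ∧ l2 ≤ i ∧ l2 ≤ j then 1 else 0 := by
  have expand : schur l1 l2
      = ∑ k ∈ range (l1 - l2 + 1), Xv 0 ^ (l2 + k) * Xv 1 ^ (l2 + (l1 - l2 - k)) := by
    rw [schur, Finset.mul_sum]
    refine Finset.sum_congr rfl fun k _ => ?_
    rw [mul_pow, pow_add, pow_add]; ring
  rw [expand, c, map_sum]
  have tc : ∀ k ∈ range (l1 - l2 + 1),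
      (MvPowerSeries.coeff (mon i j)) (Xv 0 ^ (l2 + k) * Xv 1 ^ (l2 + (l1 - l2 - k)))
        = if i = l2 + k ∧ j = l2 + (l1 - l2 - k) then (1:ℚ) else 0 := fun k _ => c_XX i j _ _
  rw [Finset.sum_congr rfl tc]
  by_cases H : i + j = l1 + l2 ∧ l2 ≤ i ∧ l2 ≤ j
  · obtain ⟨H1, H2, H3⟩ := H
    have tc2 : ∀ k ∈ range (l1 - l2 + 1),
        (if i = l2 + k ∧ j = l2 + (l1 - l2 - k) then (1:ℚ) else 0)
          = if k = i - l2 then 1 else 0 := by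
      intro k hk
      simp only [mem_range] at hk
      by_cases hki : k = i - l2
      · rw [if_pos ⟨by omega, by omega⟩, if_pos hki]
      · rw [if_neg, if_neg hki]
        rintro ⟨e1, e2⟩; omega
    rw [Finset.sum_congr rfl tc2, Finset.sum_ite_eq' (range (l1 - l2 + 1)) (i - l2),
      if_pos (by simp only [mem_range]; omega), if_pos ⟨H1, H2, H3⟩]
  · rw [if_neg H, Finset.sum_eq_zero]
    intro k hk
    simp only [mem_range] at hk
    rw [if_neg]
    rintro ⟨e1, e2⟩
    exact H ⟨by omega, by omega, by omega⟩

lemma sum_schur (μ : ℕ → ℕ → ℚ) (i j : ℕ) :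
    (∑ l1 ∈ range (i + j + 1), ∑ l2 ∈ range (l1 + 1), μ l1 l2 * c i j (schur l1 l2))
      = ∑ l2 ∈ range (min i j + 1), μ (i + j - l2) l2 := by
  have step1 : ∀ l1 ∈ range (i + j + 1),
      (∑ l2 ∈ range (l1 + 1), μ l1 l2 * c i j (schur l1 l2))
        = ∑ l2 ∈ range (i + j + 1),
            (if i + j = l1 + l2 ∧ l2 ≤ i ∧ l2 ≤ j then μ l1 l2 else 0) := by
    intro l1 hl1
    simp only [mem_range] at hl1
    have e1 : (∑ l2 ∈ range (l1 + 1), μ l1 l2 * c i j (schur l1 l2))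
        = ∑ l2 ∈ range (l1 + 1), (if i + j = l1 + l2 ∧ l2 ≤ i ∧ l2 ≤ j then μ l1 l2 else 0) := by
      refine Finset.sum_congr rfl fun l2 hl2 => ?_
      simp only [mem_range] at hl2
      rw [c_schur l1 l2 i j (by omega), mul_ite, mul_one, mul_zero]
    rw [e1]
    refine Finset.sum_subset (range_subset_range.mpr (by omega)) fun x hx hnx => ?_
    simp only [mem_range] at hx hnx
    rw [if_neg]
    rintro ⟨e1, e2, e3⟩
    omega
  rw [Finset.sum_congr rfl step1, Finset.sum_comm]
  have step2 : ∀ l2 ∈ range (i + j + 1),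
      (∑ l1 ∈ range (i + j + 1), if i + j = l1 + l2 ∧ l2 ≤ i ∧ l2 ≤ j then μ l1 l2 else 0)
        = if l2 ≤ i ∧ l2 ≤ j then μ (i + j - l2) l2 else 0 := by
    intro l2 hl2
    simp only [mem_range] at hl2
    have e2 : ∀ l1 ∈ range (i + j + 1),
        (if i + j = l1 + l2 ∧ l2 ≤ i ∧ l2 ≤ j then μ l1 l2 else 0)
          = if l1 = i + j - l2 then (if l2 ≤ i ∧ l2 ≤ j then μ (i + j - l2) l2 else 0) else 0 := by
      intro l1 hl1
      simp only [mem_range] at hl1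
      by_cases h1 : l1 = i + j - l2
      · subst h1
        by_cases h2 : l2 ≤ i ∧ l2 ≤ j
        · rw [if_pos ⟨by omega, h2⟩, if_pos rfl, if_pos h2]
        · rw [if_neg (by tauto), if_pos rfl, if_neg h2]
      · rw [if_neg, if_neg h1]
        rintro ⟨e, _⟩; omega
    rw [Finset.sum_congr rfl e2, Finset.sum_ite_eq' (range (i + j + 1)) (i + j - l2),
      if_pos (by simp only [mem_range]; omega)]
  rw [Finset.sum_congr rfl step2]
  have hsub : range (min i j + 1) ⊆ range (i + j + 1) := range_subset_range.mpr (by omega)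
  rw [← Finset.sum_subset hsub (fun x hx hnx => by
    simp only [mem_range] at hx hnx
    rw [if_neg]; rintro ⟨e1, e2⟩; omega)]
  refine Finset.sum_congr rfl fun l2 hl2 => ?_
  simp only [mem_range] at hl2
  rw [if_pos ⟨by omega, by omega⟩]

/-! ### Pure sum combinatorics -/

noncomputable def Ssum (μ : ℕ → ℕ → ℚ) (i j : ℕ) : ℚ :=
  ∑ l2 ∈ range (min i j + 1), μ (i + j - l2) l2

noncomputable def Vsum (μ : ℕ → ℕ → ℚ) (i j : ℕ) : ℚ :=
  ∑ i' ∈ range (i + 1), ∑ j' ∈ range (j + 1), Ssum μ i' j'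

noncomputable def colS (μ : ℕ → ℕ → ℚ) (x y : ℕ) : ℚ := ∑ j' ∈ range (y + 1), Ssum μ x j'

noncomputable def rowS (μ : ℕ → ℕ → ℚ) (x y : ℕ) : ℚ := ∑ i' ∈ range (x + 1), Ssum μ i' y

lemma Ssum_symm (μ : ℕ → ℕ → ℚ) (i j : ℕ) : Ssum μ i j = Ssum μ j i := by
  rw [Ssum, Ssum, min_comm j i, add_comm j i]

lemma Ssum_zero (μ : ℕ → ℕ → ℚ) (x : ℕ) : Ssum μ x 0 = μ x 0 := by simp [Ssum]

lemma Ssum_extract (μ : ℕ → ℕ → ℚ) (x y : ℕ) (hxy : y ≤ x) :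
    μ x y = Ssum μ x y - (if y = 0 then 0 else Ssum μ (x + 1) (y - 1)) := by
  by_cases hy : y = 0
  · subst hy; simp [Ssum]
  · obtain ⟨k, rfl⟩ : ∃ k, y = k + 1 := ⟨y - 1, by omega⟩
    rw [if_neg hy, Ssum, Ssum, min_eq_right hxy, min_eq_right (by omega)]
    simp only [Nat.add_sub_cancel]
    rw [Finset.sum_range_succ]
    have e : (∑ l2 ∈ range (k + 1), μ (x + (k + 1) - l2) l2)
        = ∑ l2 ∈ range (k + 1), μ (x + 1 + k - l2) l2 :=
      Finset.sum_congr rfl fun l2 _ => by congr 1; omega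
    rw [e]
    have e2 : x + (k + 1) - (k + 1) = x := by omega
    rw [e2]; ring

lemma colS_zero (μ : ℕ → ℕ → ℚ) (x : ℕ) : colS μ x 0 = Ssum μ x 0 := by simp [colS]

lemma rowS_zero (μ : ℕ → ℕ → ℚ) (y : ℕ) : rowS μ 0 y = Ssum μ 0 y := by simp [rowS]

lemma colS_succ (μ : ℕ → ℕ → ℚ) (x y : ℕ) :
    colS μ x (y + 1) = colS μ x y + Ssum μ x (y + 1) := Finset.sum_range_succ _ _

lemma rowS_colS (μ : ℕ → ℕ → ℚ) (x : ℕ) : rowS μ x (x + 1) = colS μ (x + 1) x :=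
  Finset.sum_congr rfl fun t _ => Ssum_symm μ t (x + 1)

lemma Vsum_zero (μ : ℕ → ℕ → ℚ) : Vsum μ 0 0 = Ssum μ 0 0 := by simp [Vsum]

lemma Vsum_succ_left (μ : ℕ → ℕ → ℚ) (i j : ℕ) :
    Vsum μ (i + 1) j = Vsum μ i j + colS μ (i + 1) j := Finset.sum_range_succ _ _

lemma Vsum_succ_right (μ : ℕ → ℕ → ℚ) (i j : ℕ) :
    Vsum μ i (j + 1) = Vsum μ i j + rowS μ i (j + 1) := by
  rw [Vsum, Vsum, rowS, ← Finset.sum_add_distrib]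
  exact Finset.sum_congr rfl fun i' _ => Finset.sum_range_succ _ _

lemma diag (μ : ℕ → ℕ → ℚ) (b : ℕ) :
    Vsum μ b b - (if b = 0 then 0 else Vsum μ (b + 1) (b - 1))
      = ∑ q' ∈ range (b + 1), μ b q' := by
  cases b with
  | zero => simp [Vsum, Ssum]
  | succ k =>
    rw [if_neg (Nat.succ_ne_zero k)]
    simp only [Nat.add_sub_cancel]
    have h1 : Vsum μ (k + 1) (k + 1) = Vsum μ (k + 1) k + rowS μ (k + 1) (k + 1) :=
      Vsum_succ_right μ (k + 1) k
    have h2 : Vsum μ (k + 2) k = Vsum μ (k + 1) k + colS μ (k + 2) k :=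
      Vsum_succ_left μ (k + 1) k
    have h3 : (∑ q' ∈ range (k + 2), μ (k + 1) q')
        = ∑ q' ∈ range (k + 2),
            (Ssum μ (k + 1) q' - if q' = 0 then 0 else Ssum μ (k + 2) (q' - 1)) :=
      Finset.sum_congr rfl fun q' hq' =>
        Ssum_extract μ (k + 1) q' (by simp only [mem_range] at hq'; omega)
    rw [h1, h2, h3, Finset.sum_sub_distrib]
    have h4 : (∑ q' ∈ range (k + 2), if q' = 0 then (0:ℚ) else Ssum μ (k + 2) (q' - 1))
        = colS μ (k + 2) k := by
      rw [Finset.sum_range_succ']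
      simp [colS]
    have h5 : rowS μ (k + 1) (k + 1) = ∑ q' ∈ range (k + 2), Ssum μ (k + 1) q' := by
      rw [rowS]
      exact Finset.sum_congr rfl fun i' _ => Ssum_symm μ i' (k + 1)
    rw [h4, h5]; ring

lemma key1 (μ : ℕ → ℕ → ℚ) (b q' : ℕ) :
    (Vsum μ (b + 1) (q' + 1) - Vsum μ (b + 2) q')
      - (Vsum μ (b + 1) q' - (if q' = 0 then 0 else Vsum μ (b + 2) (q' - 1)))
      - (Vsum μ b (q' + 1) - Vsum μ (b + 1) q')
      + (Vsum μ b q' - (if q' = 0 then 0 else Vsum μ (b + 1) (q' - 1)))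
      = Ssum μ (b + 1) (q' + 1) - Ssum μ (b + 2) q' := by
  cases q' with
  | zero =>
    simp only [reduceIte]
    have E1 := Vsum_succ_left μ b 1
    have E2 := Vsum_succ_left μ (b + 1) 0
    have E3 := Vsum_succ_left μ b 0
    have E4 := colS_succ μ (b + 1) 0
    have E5 := colS_zero μ (b + 2)
    have E6 := colS_zero μ (b + 1)
    ring_nf at E1 E2 E3 E4 E5 E6 ⊢
    linarith [E1, E2, E3, E4, E5, E6]
  | succ k =>
    simp only [Nat.succ_ne_zero, if_false, Nat.add_sub_cancel]
    have E1 := Vsum_succ_left μ b (k + 2)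
    have E2 := Vsum_succ_left μ (b + 1) (k + 1)
    have E3 := Vsum_succ_left μ b (k + 1)
    have E4 := Vsum_succ_left μ (b + 1) k
    have E5 := Vsum_succ_left μ b k
    have E6 := colS_succ μ (b + 1) (k + 1)
    have E7 := colS_succ μ (b + 2) k
    ring_nf at E1 E2 E3 E4 E5 E6 E7 ⊢
    linarith [E1, E2, E3, E4, E5, E6, E7]

lemma key2 (μ : ℕ → ℕ → ℚ) (q' : ℕ) :
    (Vsum μ (q' + 1) (q' + 1) - Vsum μ (q' + 2) q')
      - (Vsum μ (q' + 1) q' - (if q' = 0 then 0 else Vsum μ (q' + 2) (q' - 1)))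
      + (Vsum μ q' q' - (if q' = 0 then 0 else Vsum μ (q' + 1) (q' - 1)))
      = Ssum μ (q' + 1) (q' + 1) - Ssum μ (q' + 2) q' := by
  cases q' with
  | zero =>
    simp only [reduceIte]
    have E1 := Vsum_succ_left μ 0 1
    have E2 := Vsum_succ_right μ 0 0
    have E3 := rowS_colS μ 0
    have E4 := Vsum_succ_left μ 1 0
    have E5 := Vsum_succ_left μ 0 0
    have E6 := colS_succ μ 1 0
    have E7 := colS_zero μ 2
    have E8 := colS_zero μ 1
    ring_nf at E1 E2 E3 E4 E5 E6 E7 E8 ⊢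
    linarith [E1, E2, E3, E4, E5, E6, E7, E8]
  | succ k =>
    simp only [Nat.succ_ne_zero, if_false, Nat.add_sub_cancel]
    have E1 := Vsum_succ_left μ (k + 1) (k + 2)
    have E2 := Vsum_succ_right μ (k + 1) (k + 1)
    have E3 := rowS_colS μ (k + 1)
    have E4 := Vsum_succ_left μ (k + 2) (k + 1)
    have E5 := Vsum_succ_left μ (k + 1) (k + 1)
    have E6 := Vsum_succ_left μ (k + 2) k
    have E7 := Vsum_succ_left μ (k + 1) k
    have E8 := colS_succ μ (k + 2) (k + 1)
    have E9 := colS_succ μ (k + 3) k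
    ring_nf at E1 E2 E3 E4 E5 E6 E7 E8 E9 ⊢
    linarith [E1, E2, E3, E4, E5, E6, E7, E8, E9]

lemma subst2_XX (m : ℕ → ℕ → ℚ) (h : Q2) (hh : IsMultSeries m h) (a b : ℕ) :
    c a b (subst2 (Xv 1) (Xv 1) h) = if a = 0 then ∑ q' ∈ range (b + 1), m b q' else 0 := by
  have hc : c a b (subst2 (Xv 1) (Xv 1) h)
      = ∑ p ∈ range (a + b + 1), ∑ q ∈ range (a + b + 1),
          MvPowerSeries.coeff (mon p q) h * MvPowerSeries.coeff (mon a b) (Xv 1 ^ p * Xv 1 ^ q) := by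
    rw [c, MvPowerSeries.coeff_apply]
    show (∑ p ∈ range (mon a b 0 + mon a b 1 + 1), ∑ q ∈ range (mon a b 0 + mon a b 1 + 1),
      MvPowerSeries.coeff (mon p q) h * MvPowerSeries.coeff (mon a b) (Xv 1 ^ p * Xv 1 ^ q)) = _
    rw [mon_apply0, mon_apply1]
  rw [hc]
  have hterm : ∀ p q : ℕ,
      MvPowerSeries.coeff (mon p q) h * MvPowerSeries.coeff (mon a b) (Xv 1 ^ p * Xv 1 ^ q)
        = m (p + q) q * (if a = 0 ∧ b = p + q then 1 else 0) := by
    intro p q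
    have e1 : Xv 1 ^ p * Xv 1 ^ q = Xv 0 ^ 0 * Xv 1 ^ (p + q) := by
      rw [pow_zero, one_mul, pow_add]
    have e2 : MvPowerSeries.coeff (mon a b) (Xv 1 ^ p * Xv 1 ^ q)
        = if a = 0 ∧ b = p + q then 1 else 0 := by
      rw [e1]; exact c_XX a b 0 (p + q)
    rw [e2, show MvPowerSeries.coeff (mon p q) h = c p q h from rfl, hh p q]
  simp only [hterm]
  by_cases ha : a = 0
  · subst ha
    simp only [zero_add, if_pos rfl]
    rw [Finset.sum_comm]
    refine Finset.sum_congr rfl fun q hq => ?_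
    simp only [mem_range] at hq
    simp only [eq_self_iff_true, true_and]
    have e3 : ∀ p ∈ range (b + 1),
        m (p + q) q * (if b = p + q then (1:ℚ) else 0)
          = if p = b - q then m b q else 0 := by
      intro p hp
      simp only [mem_range] at hp
      by_cases hpq : p = b - q
      · rw [if_pos (show b = p + q by omega), mul_one, if_pos hpq]
        congr 1; omega
      · rw [if_neg (show ¬ b = p + q by omega), mul_zero, if_neg hpq]
    rw [Finset.sum_congr rfl e3, Finset.sum_ite_eq' (range (b + 1)) (b - q),
      if_pos (by simp only [mem_range]; omega)]
  · rw [if_neg ha, Finset.sum_eq_zero]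
    intro p _
    rw [Finset.sum_eq_zero]
    intro q _
    rw [if_neg (by rintro ⟨e, -⟩; exact ha e), mul_zero]

/-- Lemma 1, equation (4): if h = M'(f) and g = M'(f·((1−x)(1−y))⁻¹),
then (1−t)(t−v)·g(t,v) = t·h(t,v) − v·h(v,v).
Here the two variables of the ring of g and h are t = Xv 0 and v = Xv 1. -/
theorem operator_Y_formula
    (m m2 : ℕ → ℕ → ℚ) (f h g : Q2)
    (hf : IsSchurExpansion m f) (hh : IsMultSeries m h)
    (hg2 : IsSchurExpansion m2 (f * ((1 - Xv 0) * (1 - Xv 1))⁻¹))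
    (hg : IsMultSeries m2 g) :
    (1 - Xv 0) * (Xv 0 - Xv 1) * g = Xv 0 * h - Xv 1 * subst2 (Xv 1) (Xv 1) h := by
  classical
  set F : Q2 := f * ((1 - Xv 0) * (1 - Xv 1))⁻¹ with hF
  have hf' : ∀ i j : ℕ, c i j f =
      ∑ l1 ∈ range (i + j + 1), ∑ l2 ∈ range (l1 + 1), m l1 l2 * c i j (schur l1 l2) := hf
  have hg2' : ∀ i j : ℕ, c i j F =
      ∑ l1 ∈ range (i + j + 1), ∑ l2 ∈ range (l1 + 1), m2 l1 l2 * c i j (schur l1 l2) := hg2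
  have hh' : ∀ p q : ℕ, c p q h = m (p + q) q := hh
  have hg' : ∀ p q : ℕ, c p q g = m2 (p + q) q := hg
  have hA : ∀ i j, c i j f = Ssum m i j := fun i j => (hf' i j).trans (sum_schur m i j)
  have hB : ∀ i j, c i j F = Ssum m2 i j := fun i j => (hg2' i j).trans (sum_schur m2 i j)
  -- the relation f = (1-x)(1-y) F, coefficientwise
  have hu0 : MvPowerSeries.constantCoeff ((1 - Xv 0) * (1 - Xv 1)) ≠ 0 := by
    simp [Xv]
  have hu : ((1 - Xv 0) * (1 - Xv 1)) * ((1 - Xv 0) * (1 - Xv 1))⁻¹ = 1 :=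
    MvPowerSeries.mul_inv_cancel _ hu0
  have hfF : f = F - Xv 0 * F - Xv 1 * F + Xv 0 * (Xv 1 * F) := by
    have h1 : (1 - Xv 0) * (1 - Xv 1) * F = f := by
      rw [hF]
      calc (1 - Xv 0) * (1 - Xv 1) * (f * ((1 - Xv 0) * (1 - Xv 1))⁻¹)
          = f * (((1 - Xv 0) * (1 - Xv 1)) * ((1 - Xv 0) * (1 - Xv 1))⁻¹) := by ring
        _ = f := by rw [hu, mul_one]
    calc f = (1 - Xv 0) * (1 - Xv 1) * F := h1.symm
      _ = F - Xv 0 * F - Xv 1 * F + Xv 0 * (Xv 1 * F) := by ring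
  have hC : ∀ i j, Ssum m i j = Ssum m2 i j
      - (if i = 0 then 0 else Ssum m2 (i - 1) j)
      - (if j = 0 then 0 else Ssum m2 i (j - 1))
      + (if i = 0 then 0 else if j = 0 then 0 else Ssum m2 (i - 1) (j - 1)) := by
    intro i j
    have e0 := congrArg (c i j) hfF
    rw [c_add, c_sub, c_sub] at e0
    simp only [c_X0_mul, c_X1_mul, hB] at e0
    rw [← hA i j]
    exact e0
  -- Ssum m2 = Vsum m
  have hD : ∀ i j, Ssum m2 i j = Vsum m i j := by
    intro i
    induction i with
    | zero =>
      intro j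
      induction j with
      | zero =>
        have h00 := hC 0 0
        simp only [reduceIte] at h00
        rw [Vsum_zero]
        linarith [h00]
      | succ j ihj =>
        have hCj := hC 0 (j + 1)
        simp only [reduceIte, Nat.succ_ne_zero, if_false, Nat.add_sub_cancel] at hCj
        have E1 := Vsum_succ_right m 0 j
        have E2 := rowS_zero m (j + 1)
        linarith [hCj, ihj, E1, E2]
    | succ i ihi =>
      intro j
      induction j with
      | zero =>
        have hCi := hC (i + 1) 0
        simp only [reduceIte, Nat.succ_ne_zero, if_false, Nat.add_sub_cancel] at hCi
        have E1 := Vsum_succ_left m i 0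
        have E2 := colS_zero m (i + 1)
        linarith [hCi, ihi 0, E1, E2]
      | succ j ihj =>
        have hCij := hC (i + 1) (j + 1)
        simp only [Nat.succ_ne_zero, if_false, Nat.add_sub_cancel] at hCij
        have E1 := Vsum_succ_left m i (j + 1)
        have E2 := Vsum_succ_left m i j
        have E3 := colS_succ m (i + 1) j
        linarith [hCij, ihi (j + 1), ihi j, ihj, E1, E2, E3]
  -- extraction of m2 and m
  have hm2V : ∀ x y, y ≤ x →
      m2 x y = Vsum m x y - (if y = 0 then 0 else Vsum m (x + 1) (y - 1)) := by
    intro x y hxy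
    have e := Ssum_extract m2 x y hxy
    simp only [hD] at e
    exact e
  have hmS : ∀ x y, y ≤ x →
      m x y = Ssum m x y - (if y = 0 then 0 else Ssum m (x + 1) (y - 1)) := Ssum_extract m
  -- now compare coefficients
  apply MvPowerSeries.ext
  intro e
  obtain ⟨p, q, rfl⟩ : ∃ p q, e = mon p q := ⟨e 0, e 1, eq_mon e⟩
  show c p q ((1 - Xv 0) * (Xv 0 - Xv 1) * g) = c p q (Xv 0 * h - Xv 1 * subst2 (Xv 1) (Xv 1) h)
  have hL : (1 - Xv 0) * (Xv 0 - Xv 1) * g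
      = Xv 0 * g - Xv 1 * g - Xv 0 * (Xv 0 * g) + Xv 0 * (Xv 1 * g) := by ring
  rw [hL, c_add, c_sub, c_sub, c_sub]
  simp only [c_X0_mul, c_X1_mul, hg', hh', subst2_XX m h hh]
  rcases p with _ | p'
  · rcases q with _ | q'
    · simp
    · -- p = 0, q = q'+1
      simp only [reduceIte, Nat.succ_ne_zero, if_false, Nat.add_sub_cancel]
      have e1 := hm2V q' q' le_rfl
      have e2 := diag m q'
      ring_nf at e1 e2 ⊢
      linarith [e1, e2]
  · rcases q with _ | q'
    · -- q = 0
      simp only [reduceIte, Nat.succ_ne_zero, if_false, Nat.add_sub_cancel]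
      rcases p' with _ | p''
      · simp only [reduceIte]
        have e1 := hm2V 0 0 le_rfl
        simp only [reduceIte] at e1
        have e2 := Vsum_zero m
        have e3 := Ssum_zero m 0
        have e4 := hmS 0 0 le_rfl
        simp only [reduceIte] at e4
        ring_nf at e1 e2 e3 e4 ⊢
        linarith [e1, e2, e3, e4]
      · simp only [Nat.succ_ne_zero, if_false, Nat.add_sub_cancel]
        have e1 := hm2V (p'' + 1) 0 (Nat.zero_le _)
        have e2 := hm2V p'' 0 (Nat.zero_le _)
        simp only [reduceIte] at e1 e2
        have e3 := Vsum_succ_left m p'' 0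
        have e4 := colS_zero m (p'' + 1)
        have e5 := Ssum_zero m (p'' + 1)
        have e6 := hmS (p'' + 1) 0 (Nat.zero_le _)
        simp only [reduceIte] at e6
        ring_nf at e1 e2 e3 e4 e5 e6 ⊢
        linarith [e1, e2, e3, e4, e5, e6]
    · -- p = p'+1, q = q'+1
      simp only [Nat.succ_ne_zero, if_false, Nat.add_sub_cancel]
      rcases p' with _ | p''
      · -- p = 1 : a = q
        simp only [reduceIte]
        have e1 := hm2V (q' + 1) (q' + 1) le_rfl
        have e2 := hm2V (q' + 1) q' (by omega)
        have e3 := hm2V q' q' le_rfl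
        simp only [Nat.succ_ne_zero, if_false, Nat.add_sub_cancel] at e1
        have e4 := key2 m q'
        have e5 := hmS (q' + 1) (q' + 1) le_rfl
        simp only [Nat.succ_ne_zero, if_false, Nat.add_sub_cancel] at e5
        ring_nf at e1 e2 e3 e4 e5 ⊢
        linarith [e1, e2, e3, e4, e5]
      · -- p ≥ 2
        simp only [Nat.succ_ne_zero, if_false, Nat.add_sub_cancel]
        set b : ℕ := p'' + q' + 1 with hb
        have e1 := hm2V (b + 1) (q' + 1) (by omega)
        have e2 := hm2V (b + 1) q' (by omega)
        have e3 := hm2V b (q' + 1) (by omega)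
        have e4 := hm2V b q' (by omega)
        simp only [Nat.succ_ne_zero, if_false, Nat.add_sub_cancel] at e1 e3
        have e5 := key1 m b q'
        have e6 := hmS (b + 1) (q' + 1) (by omega)
        simp only [Nat.succ_ne_zero, if_false, Nat.add_sub_cancel] at e6
        have hb1 : p'' + 1 + (q' + 1) = b + 1 := by omega
        have hb2 : p'' + 1 + 1 + q' = b + 1 := by omega
        have hb3 : p'' + (q' + 1) = b := by omega
        have hb4 : p'' + 1 + q' = b := by omega
        rw [hb1, hb2, hb3, hb4]
        ring_nf at e1 e2 e3 e4 e5 e6 ⊢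
        linarith [e1, e2, e3, e4, e5, e6]
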